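/- Let R₀ ⊇ R₁ ⊇ R₂ ⊇ ⋯ be a decreasing sequence of symmetric relations on ℕ with R₀ = ℕ × ℕ, and suppose that for each m, every infinite subset T ⊆ ℕ contains two distinct elements n, n' with (n, n') ∈ R_m. Then there exists a strictly increasing sequence n₁ < n₂ < n₃ < ⋯ such that (n_k, n_{k+1}) ∈ R_k for all k ≥ 1. -/

import Mathlib

theorem nested_relations_increasing_chain (R : ℕ → ℕ → ℕ → Prop)
    (hsymm : ∀ m a b, R m a b → R m b a)
    (hdecr : ∀ m a b, R (m + 1) a b → R m a b)
    (h0 : ∀ a b, R 0 a b)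
    (hram : ∀ m : ℕ, ∀ T : Set ℕ, T.Infinite →
      ∃ n ∈ T, ∃ n' ∈ T, n ≠ n' ∧ R m n n') :
    ∃ n : ℕ → ℕ, StrictMono n ∧ ∀ k : ℕ, 1 ≤ k → R k (n k) (n (k + 1)) := by
  -- Key claim: in any infinite set, some element has infinitely many neighbors.
  have claim : ∀ m (T : Set ℕ), T.Infinite →
      ∃ e ∈ T, {x | x ∈ T ∧ x ≠ e ∧ R m e x}.Infinite := by
    intro m T hT
    by_contra hc
    push_neg at hc
    have hfin : ∀ e ∈ T, {x | x ∈ T ∧ x ≠ e ∧ R m e x}.Finite := by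
      intro e he
      exact hc e he
    -- step: given infinite S ⊆ T, pick e ∈ S, shrink to non-neighbors above e
    have hstep : ∀ S : Set ℕ, S.Infinite → S ⊆ T →
        ∃ e ∈ S, ({x | x ∈ S ∧ e < x ∧ ¬ R m e x}).Infinite := by
      intro S hS hsub
      obtain ⟨e, he⟩ := hS.nonempty
      refine ⟨e, he, ?_⟩
      have heq : {x | x ∈ S ∧ e < x ∧ ¬ R m e x}
          = S \ (Set.Iic e ∪ {x | x ∈ T ∧ x ≠ e ∧ R m e x}) := by
        ext x
        simp only [Set.mem_setOf_eq, Set.mem_diff, Set.mem_union, Set.mem_Iic, not_or, not_le]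
        constructor
        · rintro ⟨hx, hlt, hr⟩
          exact ⟨hx, hlt, fun h => hr h.2.2⟩
        · rintro ⟨hx, hlt, hn⟩
          refine ⟨hx, hlt, fun hr => hn ⟨hsub hx, Nat.ne_of_gt hlt, hr⟩⟩
      rw [heq]
      exact hS.diff ((Set.finite_Iic e).union (hfin e (hsub he)))
    choose f hf1 hf2 using hstep
    -- build nested sequence of infinite sets
    let G : ℕ → {S : Set ℕ // S.Infinite ∧ S ⊆ T} :=
      fun k => Nat.rec ⟨T, hT, subset_rfl⟩
        (fun _ p => ⟨{x | x ∈ p.1 ∧ f p.1 p.2.1 p.2.2 < x ∧ ¬ R m (f p.1 p.2.1 p.2.2) x},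
          hf2 p.1 p.2.1 p.2.2, fun x hx => p.2.2 hx.1⟩) k
    let e : ℕ → ℕ := fun k => f (G k).1 (G k).2.1 (G k).2.2
    have hGsucc : ∀ k, (G (k+1)).1 = {x | x ∈ (G k).1 ∧ e k < x ∧ ¬ R m (e k) x} :=
      fun k => rfl
    have heG : ∀ k, e k ∈ (G k).1 := fun k => hf1 (G k).1 (G k).2.1 (G k).2.2
    have hnest : ∀ j k, j ≤ k → (G k).1 ⊆ (G j).1 := by
      intro j k hjk
      induction k with
      | zero => simp_all
      | succ k ih =>
        rcases Nat.eq_or_lt_of_le hjk with h | h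
        · subst h; exact subset_rfl
        · intro x hx
          rw [hGsucc k] at hx
          exact ih (Nat.lt_succ_iff.mp h) hx.1
    have hkey : ∀ j k, j < k → e j < e k ∧ ¬ R m (e j) (e k) := by
      intro j k hjk
      have : e k ∈ (G (j+1)).1 := hnest (j+1) k hjk (heG k)
      rw [hGsucc j] at this
      exact this.2
    have hemono : StrictMono e := strictMono_nat_of_lt_succ fun k => (hkey k (k+1) (Nat.lt_succ_self k)).1
    have hU : (Set.range e).Infinite := Set.infinite_range_of_injective hemono.injective
    obtain ⟨a, ha, b, hb, hab, hr⟩ := hram m (Set.range e) hU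
    obtain ⟨j, rfl⟩ := ha
    obtain ⟨k, rfl⟩ := hb
    rcases lt_trichotomy j k with h | h | h
    · exact (hkey j k h).2 hr
    · exact hab (by rw [h])
    · exact (hkey k j h).2 (hsymm m _ _ hr)
  -- Build step for the chain: from infinite S, get e ∈ S and infinite S' of R_k-neighbors above e
  have build : ∀ (k : ℕ) (S : Set ℕ), S.Infinite →
      ∃ e, ∃ S' : Set ℕ, S'.Infinite ∧ e ∈ S ∧ ∀ x ∈ S', e < x ∧ R k e x := by
    intro k S hS
    obtain ⟨e, heS, hN⟩ := claim k S hS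
    refine ⟨e, {x | (x ∈ S ∧ x ≠ e ∧ R k e x) ∧ e < x}, ?_, heS, ?_⟩
    · have heq : {x | (x ∈ S ∧ x ≠ e ∧ R k e x) ∧ e < x}
          = {x | x ∈ S ∧ x ≠ e ∧ R k e x} \ Set.Iic e := by
        ext x
        simp only [Set.mem_setOf_eq, Set.mem_diff, Set.mem_Iic, not_le]
      rw [heq]
      exact hN.diff (Set.finite_Iic e)
    · rintro x ⟨⟨_, _, hr⟩, hlt⟩
      exact ⟨hlt, hr⟩
  choose g S' hInf hmem hprop using build
  have hinf1 : ({x : ℕ | 1 ≤ x}).Infinite := by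
    have : {x : ℕ | 1 ≤ x} = Set.Ici 1 := rfl
    rw [this]; exact Set.Ici_infinite 1
  -- D k = (n_{k+1}, S_{k+1}) with all of S_{k+1} above n_{k+1} and R(k+1)-related to it
  let D : ∀ k : ℕ, {p : ℕ × Set ℕ // p.2.Infinite ∧ ∀ x ∈ p.2, p.1 < x ∧ R (k+1) p.1 x} :=
    fun k => Nat.rec
      (motive := fun k => {p : ℕ × Set ℕ // p.2.Infinite ∧ ∀ x ∈ p.2, p.1 < x ∧ R (k+1) p.1 x})
      ⟨(g 1 {x | 1 ≤ x} hinf1, S' 1 {x | 1 ≤ x} hinf1),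
        hInf 1 {x | 1 ≤ x} hinf1, hprop 1 {x | 1 ≤ x} hinf1⟩
      (fun k p => ⟨(g (k+2) p.1.2 p.2.1, S' (k+2) p.1.2 p.2.1),
        hInf (k+2) p.1.2 p.2.1, hprop (k+2) p.1.2 p.2.1⟩) k
  have hDsucc : ∀ k, (D (k+1)).1.1 = g (k+2) (D k).1.2 (D k).2.1 := fun k => rfl
  have hDsuccmem : ∀ k, (D (k+1)).1.1 ∈ (D k).1.2 := by
    intro k
    rw [hDsucc k]
    exact hmem (k+2) (D k).1.2 (D k).2.1
  have hstep' : ∀ k, (D k).1.1 < (D (k+1)).1.1 ∧ R (k+1) (D k).1.1 (D (k+1)).1.1 :=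
    fun k => (D k).2.2 _ (hDsuccmem k)
  have hD0 : 1 ≤ (D 0).1.1 := hmem 1 {x | 1 ≤ x} hinf1
  refine ⟨fun k => Nat.rec 0 (fun j _ => (D j).1.1) k, ?_, ?_⟩
  · apply strictMono_nat_of_lt_succ
    intro k
    cases k with
    | zero => exact Nat.lt_of_lt_of_le Nat.zero_lt_one hD0
    | succ j => exact (hstep' j).1
  · intro k hk
    cases k with
    | zero => omega
    | succ j => exact (hstep' j).2
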